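/- Let p be an odd prime, s ≥ 1, n ≥ 1, F_q a finite field of characteristic p, ξ ∈ F_q nonzero with x^n - ξ and x^n + ξ irreducible over F_q, and λ = (ξ²)^{p^s}. Let i, j be integers with 2p^{s-1} < i < p^s and 0 < j ≤ p^{s-1}. Then the minimum Hamming distance of the ideal C = ⟨(x^n - ξ)^i (x^n + ξ)^j⟩ in F_q[x]/⟨x^{2np^s} - λ⟩ equals 4. -/

import Mathlib

open Polynomial

private lemma aux_ndeg_CXpow_le {F : Type*} [Field F] (a : F) (b : ℕ) :
    (C a * X ^ b : F[X]).natDegree ≤ b :=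
  le_trans (natDegree_mul_le) (by simp)

private lemma aux_card1 {F : Type*} [Field F] (a : F) (b : ℕ) :
    (C a * X ^ b : F[X]).support.card ≤ 1 := by
  refine le_trans (Finset.card_le_card (support_C_mul_X_pow' b a)) (by simp)

private lemma aux_card2 {F : Type*} [Field F] (a c : F) (b d : ℕ) :
    (C a * X ^ b + C c * X ^ d : F[X]).support.card ≤ 2 := by
  refine le_trans (Finset.card_le_card support_add) ?_
  refine le_trans (Finset.card_union_le _ _) ?_
  have := aux_card1 a b; have := aux_card1 c d; omega

private lemma aux_card3 {F : Type*} [Field F] (a c e : F) (b d k : ℕ) :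
    (C a * X ^ b + C c * X ^ d + C e * X ^ k : F[X]).support.card ≤ 3 := by
  refine le_trans (Finset.card_le_card support_add) ?_
  refine le_trans (Finset.card_union_le _ _) ?_
  have := aux_card2 a c b d; have := aux_card1 e k; omega

private lemma aux_pow_dvd_of_pow_dvd_pow {R : Type*} [CommRing R] [IsDomain R] {π : R}
    (hπ : Prime π) {q : ℕ} (hq : q ≠ 0) :
    ∀ (m : ℕ) (g : R), g ≠ 0 → π ^ (q * m + 1) ∣ g ^ q → π ^ (m + 1) ∣ g := by
  intro m
  induction m with
  | zero =>
    intro g hg h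
    rw [pow_one]
    exact hπ.dvd_of_dvd_pow (dvd_trans (dvd_pow_self π (by omega)) h)
  | succ m ih =>
    intro g hg h
    have h1 : π ∣ g := hπ.dvd_of_dvd_pow (dvd_trans (dvd_pow_self π (by omega)) h)
    obtain ⟨g', rfl⟩ := h1
    have hg' : g' ≠ 0 := right_ne_zero_of_mul hg
    have h2 : π ^ q * π ^ (q * m + 1) ∣ π ^ q * g' ^ q := by
      rw [← pow_add]
      have he : q + (q * m + 1) = q * (m + 1) + 1 := by ring
      rw [he, ← mul_pow]
      exact h
    have h3 : π ^ (q * m + 1) ∣ g' ^ q :=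
      (mul_dvd_mul_iff_left (pow_ne_zero q hπ.ne_zero)).mp h2
    have h4 := ih g' hg' h3
    calc π ^ (m + 1 + 1) = π * π ^ (m + 1) := by ring
    _ ∣ π * g' := mul_dvd_mul_left π h4

private lemma aux_pow_dvd_derivative {F : Type*} [Field F] {π f : F[X]} {m : ℕ}
    (h : π ^ (m + 1) ∣ f) : π ^ m ∣ derivative f := by
  obtain ⟨g, rfl⟩ := h
  rw [derivative_mul, derivative_pow]
  refine dvd_add ?_ ?_
  · exact Dvd.dvd.mul_right (Dvd.dvd.mul_right (by simpa using (dvd_mul_left (π ^ m) (C ((m+1 : ℕ) : F)))) _) _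
  · exact dvd_mul_of_dvd_left (pow_dvd_pow π (by omega)) _

private lemma aux_not_dvd_C_mul_X_pow {F : Type*} [Field F] {π : F[X]} (hπ : Irreducible π)
    (h0 : π.coeff 0 ≠ 0) {c : F} (hc : c ≠ 0) (t : ℕ) : ¬ π ∣ C c * X ^ t := by
  intro h
  have hX : π ∣ X ^ t := by
    obtain ⟨q, hq⟩ := h
    have hXt : (X ^ t : F[X]) = C c⁻¹ * (C c * X ^ t) := by
      rw [← mul_assoc, ← C_mul, inv_mul_cancel₀ hc, C_1, one_mul]
    exact ⟨C c⁻¹ * q, by rw [hXt, hq]; ring⟩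
  rcases Nat.eq_zero_or_pos t with rfl | ht
  · exact hπ.not_isUnit (isUnit_of_dvd_one (by simpa using hX))
  · have hdX : π ∣ X := hπ.prime.dvd_of_dvd_pow hX
    obtain ⟨w, hw⟩ := hdX
    have hw0 : w.coeff 0 = 0 := by
      have h2 := congrArg (fun g : F[X] => g.coeff 0) hw
      simp only [coeff_X_zero, mul_coeff_zero] at h2
      rcases mul_eq_zero.mp h2.symm with h3 | h3
      · exact absurd h3 h0
      · exact h3
    obtain ⟨w2, rfl⟩ := (X_dvd_iff).mpr hw0
    have hone : (1 : F[X]) = π * w2 := by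
      apply mul_left_cancel₀ (X_ne_zero (R := F))
      rw [mul_one]; conv_lhs => rw [hw]
      ring
    exact hπ.not_isUnit (IsUnit.of_mul_eq_one _ hone.symm)

private def At (p : ℕ) : ℕ → ℕ
  | 0 => 1
  | t + 1 => 2 * p ^ t + 1

private lemma aux_key (p n : ℕ) (hp : p.Prime) (hp3 : 3 ≤ p) (hn : 1 ≤ n)
    {F : Type*} [Field F] [Fintype F] [CharP F p]
    {ξ : F} (hξ : ξ ≠ 0)
    (hirr1 : Irreducible ((X : F[X]) ^ n - C ξ))
    (hirr2 : Irreducible ((X : F[X]) ^ n + C ξ)) :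
    ∀ (t : ℕ) (f : F[X]), f.coeff 0 ≠ 0 → f.natDegree < 2 * n * p ^ t →
      f.support.card ≤ 3 → ((X : F[X]) ^ n - C ξ) ^ (At p t) ∣ f →
      ((X : F[X]) ^ n + C ξ) ∣ f → False := by
  haveI : Fact p.Prime := ⟨hp⟩
  set π₁ : F[X] := X ^ n - C ξ with hπ₁
  set π₂ : F[X] := X ^ n + C ξ with hπ₂
  have hπ₂' : π₂ = X ^ n - C (-ξ) := by rw [hπ₂, map_neg, sub_neg_eq_add]
  have hc₁ : π₁.coeff 0 = -ξ := by
    rw [hπ₁, coeff_sub, coeff_X_pow, coeff_C, if_neg (by omega), if_pos rfl, zero_sub]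
  have hc₂ : π₂.coeff 0 = ξ := by
    rw [hπ₂, coeff_add, coeff_X_pow, coeff_C, if_neg (by omega), if_pos rfl, zero_add]
  have hc₁' : π₁.coeff 0 ≠ 0 := by rw [hc₁]; exact neg_ne_zero.mpr hξ
  have hc₂' : π₂.coeff 0 ≠ 0 := by rw [hc₂]; exact hξ
  have hn₁ : π₁.natDegree = n := by rw [hπ₁]; exact natDegree_X_pow_sub_C
  have hn₂ : π₂.natDegree = n := by rw [hπ₂']; exact natDegree_X_pow_sub_C
  have hne₁ : π₁ ≠ 0 := hirr1.ne_zero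
  have hne₂ : π₂ ≠ 0 := hirr2.ne_zero
  have hnd : ¬ π₁ ∣ π₂ := by
    intro hdvd
    have hass := hirr1.associated_of_dvd hirr2 hdvd
    have heq := eq_of_monic_of_associated (monic_X_pow_sub_C ξ (by omega)) 
      (hπ₂' ▸ monic_X_pow_sub_C (-ξ) (by omega) : π₂.Monic) hass
    have h2 := congrArg (fun g : F[X] => g.coeff 0) heq
    simp only [hc₁, hc₂] at h2
    rw [← hπ₁, hc₁] at h2
    have h2' : (2 : F) * ξ = 0 := by linear_combination -h2
    rcases mul_eq_zero.mp h2' with h3 | h3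
    · have hpd : p ∣ 2 := (CharP.cast_eq_zero_iff F p 2).mp (by exact_mod_cast h3)
      have := Nat.le_of_dvd (by omega) hpd
      omega
    · exact hξ h3
  have hcop : IsCoprime π₁ π₂ := (Irreducible.coprime_iff_not_dvd hirr1).mpr hnd
  intro t
  induction t with
  | zero =>
    intro f h0 hdeg hcard hd1 hd2
    have hf0 : f ≠ 0 := fun h => h0 (by rw [h]; simp)
    rw [show At p 0 = 1 from rfl, pow_one] at hd1
    have hdd : π₁ * π₂ ∣ f := hcop.mul_dvd hd1 hd2
    have hdeg2 : (π₁ * π₂).natDegree ≤ f.natDegree := natDegree_le_of_dvd hdd hf0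
    rw [natDegree_mul hne₁ hne₂, hn₁, hn₂] at hdeg2
    simp only [pow_zero, mul_one] at hdeg
    omega
  | succ t ih =>
    intro f h0 hdeg hcard hd1 hd2
    have hf0 : f ≠ 0 := fun h => h0 (by rw [h]; simp)
    have hppos : 0 < p ^ t := pow_pos (by omega) t
    have hAt : At p (t+1) = 2 * p ^ t + 1 := rfl
    have hA1 : 1 ≤ At p (t+1) := by omega
    have hc1 : 1 ≤ f.support.card := Finset.card_pos.mpr ⟨0, mem_support_iff.mpr h0⟩
    have hπ1p : Prime π₁ := hirr1.prime
    have hπ2p : Prime π₂ := hirr2.prime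
    rcases (by omega : f.support.card = 1 ∨ f.support.card = 2 ∨ f.support.card = 3) with hc | hc | hc
    · obtain ⟨k, x, hx, rfl⟩ := Polynomial.card_support_eq_one.mp hc
      exact aux_not_dvd_C_mul_X_pow hirr1 hc₁' hx k
        (dvd_trans (dvd_pow_self π₁ (by omega)) hd1)
    · obtain ⟨k, m, hkm, x, y, hx, hy, rfl⟩ := Polynomial.card_support_eq_two.mp hc
      have hk0 : k = 0 := by
        by_contra hk
        apply h0
        rw [coeff_add, coeff_C_mul, coeff_C_mul, coeff_X_pow, coeff_X_pow,
          if_neg (by omega), if_neg (by omega)]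
        simp
      subst hk0
      have hm1 : 1 ≤ m := hkm
      have hnd : (C x * X ^ 0 + C y * X ^ m).natDegree = m := by
        rw [natDegree_add_eq_right_of_natDegree_lt]
        · exact natDegree_C_mul_X_pow m y hy
        · rw [natDegree_C_mul_X_pow m y hy]
          exact lt_of_le_of_lt (aux_ndeg_CXpow_le x 0) hm1
      by_cases hpm : p ∣ m
      · obtain ⟨m', rfl⟩ := hpm
        have hm'1 : 1 ≤ m' := by
          rcases Nat.eq_zero_or_pos m' with rfl | h
          · simp at hm1
          · exact h
        set x' := (frobeniusEquiv F p).symm x with hx'def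
        set y' := (frobeniusEquiv F p).symm y with hy'def
        have hx'p : x' ^ p = x := by
          have h := (frobeniusEquiv F p).apply_symm_apply x
          rwa [frobeniusEquiv_def] at h
        have hy'p : y' ^ p = y := by
          have h := (frobeniusEquiv F p).apply_symm_apply y
          rwa [frobeniusEquiv_def] at h
        have hx' : x' ≠ 0 := fun h => hx (by rw [← hx'p, h, zero_pow (by omega : p ≠ 0)])
        have hy' : y' ≠ 0 := fun h => hy (by rw [← hy'p, h, zero_pow (by omega : p ≠ 0)])
        set f1 : F[X] := C x' * X ^ 0 + C y' * X ^ m' with hf1def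
        have hf1 : f1 ^ p = C x * X ^ 0 + C y * X ^ (p * m') := by
          rw [hf1def, add_pow_char, mul_pow, mul_pow, ← C_pow, ← C_pow, hx'p, hy'p,
            ← pow_mul, ← pow_mul, Nat.zero_mul, Nat.mul_comm m' p]
        have hf1c : f1.coeff 0 = x' := by
          rw [hf1def, coeff_add, coeff_C_mul, coeff_C_mul, coeff_X_pow, coeff_X_pow,
            if_pos rfl, if_neg (by omega)]
          simp
        have hf1c' : f1.coeff 0 ≠ 0 := by rw [hf1c]; exact hx'
        have hf1ne : f1 ≠ 0 := fun h => hf1c' (by rw [h]; simp)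
        have hf1deg : f1.natDegree < 2 * n * p ^ t := by
          have h1 : f1.natDegree ≤ m' := le_trans (natDegree_add_le _ _)
            (max_le (le_trans (aux_ndeg_CXpow_le x' 0) (by omega)) (aux_ndeg_CXpow_le y' m'))
          have h2 : p * m' < p * (2 * n * p ^ t) := by
            have h3 := hnd ▸ hdeg
            calc p * m' < 2 * n * p ^ (t + 1) := h3
            _ = p * (2 * n * p ^ t) := by ring
          exact lt_of_le_of_lt h1 (Nat.lt_of_mul_lt_mul_left h2)
        have hf1card : f1.support.card ≤ 3 := le_trans (aux_card2 x' y' 0 m') (by omega)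
        rw [← hf1] at hd1 hd2
        have hd1f : π₁ ^ At p t ∣ f1 := by
          cases t with
          | zero =>
            show π₁ ^ 1 ∣ f1
            rw [pow_one]
            exact hπ1p.dvd_of_dvd_pow (dvd_trans (dvd_pow_self π₁ (by omega)) hd1)
          | succ t' =>
            have harith : At p (t' + 1 + 1) = p * (2 * p ^ t') + 1 := by
              show 2 * p ^ (t' + 1) + 1 = p * (2 * p ^ t') + 1
              ring
            rw [harith] at hd1
            exact aux_pow_dvd_of_pow_dvd_pow hπ1p (by omega : p ≠ 0) (2 * p ^ t') f1 hf1ne hd1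
        have hd2f : π₂ ∣ f1 := hπ2p.dvd_of_dvd_pow hd2
        exact ih f1 hf1c' hf1deg hf1card hd1f hd2f
      · have h2dvd : π₁ ^ 2 ∣ _ := dvd_trans (pow_dvd_pow π₁ (by omega : 2 ≤ At p (t+1))) hd1
        have hder : π₁ ∣ derivative (C x * X ^ 0 + C y * X ^ m) := by
          simpa using aux_pow_dvd_derivative (m := 1) h2dvd
        have hderval : derivative (C x * X ^ 0 + C y * X ^ m) = C (y * (m:F)) * X ^ (m-1) := by
          simp [derivative_C_mul, derivative_X_pow, C_mul]
          ring
        have hyne : y * (m:F) ≠ 0 :=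
          mul_ne_zero hy (fun h => hpm ((CharP.cast_eq_zero_iff F p m).mp h))
        exact aux_not_dvd_C_mul_X_pow hirr1 hc₁' hyne (m-1) (hderval ▸ hder)
    · obtain ⟨k, m, u, hkm, hmu, x, y, z, hx, hy, hz, rfl⟩ := Polynomial.card_support_eq_three.mp hc
      have hk0 : k = 0 := by
        by_contra hk
        apply h0
        rw [coeff_add, coeff_add, coeff_C_mul, coeff_C_mul, coeff_C_mul, coeff_X_pow,
          coeff_X_pow, coeff_X_pow, if_neg (by omega), if_neg (by omega), if_neg (by omega)]
        simp
      subst hk0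
      have hm1 : 1 ≤ m := hkm
      have hnd : (C x * X ^ 0 + C y * X ^ m + C z * X ^ u).natDegree = u := by
        rw [natDegree_add_eq_right_of_natDegree_lt]
        · exact natDegree_C_mul_X_pow u z hz
        · rw [natDegree_C_mul_X_pow u z hz]
          have h1 : (C x * X ^ 0 + C y * X ^ m).natDegree ≤ m := le_trans (natDegree_add_le _ _)
            (max_le (le_trans (aux_ndeg_CXpow_le x 0) (by omega)) (aux_ndeg_CXpow_le y m))
          omega
      by_cases hpu : p ∣ u
      · by_cases hpm : p ∣ m
        · -- Frobenius descent
          obtain ⟨m', rfl⟩ := hpm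
          obtain ⟨u', rfl⟩ := hpu
          have hm'1 : 1 ≤ m' := by
            rcases Nat.eq_zero_or_pos m' with rfl | h
            · simp at hm1
            · exact h
          have hmu' : m' < u' := Nat.lt_of_mul_lt_mul_left hmu
          set x' := (frobeniusEquiv F p).symm x with hx'def
          set y' := (frobeniusEquiv F p).symm y with hy'def
          set z' := (frobeniusEquiv F p).symm z with hz'def
          have hx'p : x' ^ p = x := by
            have h := (frobeniusEquiv F p).apply_symm_apply x
            rwa [frobeniusEquiv_def] at h
          have hy'p : y' ^ p = y := by
            have h := (frobeniusEquiv F p).apply_symm_apply y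
            rwa [frobeniusEquiv_def] at h
          have hz'p : z' ^ p = z := by
            have h := (frobeniusEquiv F p).apply_symm_apply z
            rwa [frobeniusEquiv_def] at h
          have hx' : x' ≠ 0 := fun h => hx (by rw [← hx'p, h, zero_pow (by omega : p ≠ 0)])
          set f1 : F[X] := C x' * X ^ 0 + C y' * X ^ m' + C z' * X ^ u' with hf1def
          have hf1 : f1 ^ p = C x * X ^ 0 + C y * X ^ (p * m') + C z * X ^ (p * u') := by
            rw [hf1def, add_pow_char, add_pow_char, mul_pow, mul_pow, mul_pow,
              ← C_pow, ← C_pow, ← C_pow, hx'p, hy'p, hz'p,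
              ← pow_mul, ← pow_mul, ← pow_mul, Nat.zero_mul, Nat.mul_comm m' p, Nat.mul_comm u' p]
          have hf1c : f1.coeff 0 = x' := by
            rw [hf1def, coeff_add, coeff_add, coeff_C_mul, coeff_C_mul, coeff_C_mul, coeff_X_pow,
              coeff_X_pow, coeff_X_pow, if_pos rfl, if_neg (by omega), if_neg (by omega)]
            simp
          have hf1c' : f1.coeff 0 ≠ 0 := by rw [hf1c]; exact hx'
          have hf1ne : f1 ≠ 0 := fun h => hf1c' (by rw [h]; simp)
          have hf1deg : f1.natDegree < 2 * n * p ^ t := by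
            have h1 : f1.natDegree ≤ u' := by
              refine le_trans (natDegree_add_le _ _) (max_le ?_ (aux_ndeg_CXpow_le z' u'))
              refine le_trans (natDegree_add_le _ _) (max_le ?_ ?_)
              · exact le_trans (aux_ndeg_CXpow_le x' 0) (by omega)
              · exact le_trans (aux_ndeg_CXpow_le y' m') (by omega)
            have h2 : p * u' < p * (2 * n * p ^ t) := by
              have h3 := hnd ▸ hdeg
              calc p * u' < 2 * n * p ^ (t + 1) := h3
              _ = p * (2 * n * p ^ t) := by ring
            exact lt_of_le_of_lt h1 (Nat.lt_of_mul_lt_mul_left h2)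
          have hf1card : f1.support.card ≤ 3 := aux_card3 x' y' z' 0 m' u'
          rw [← hf1] at hd1 hd2
          have hd1f : π₁ ^ At p t ∣ f1 := by
            cases t with
            | zero =>
              show π₁ ^ 1 ∣ f1
              rw [pow_one]
              exact hπ1p.dvd_of_dvd_pow (dvd_trans (dvd_pow_self π₁ (by omega)) hd1)
            | succ t' =>
              have harith : At p (t' + 1 + 1) = p * (2 * p ^ t') + 1 := by
                show 2 * p ^ (t' + 1) + 1 = p * (2 * p ^ t') + 1
                ring
              rw [harith] at hd1
              exact aux_pow_dvd_of_pow_dvd_pow hπ1p (by omega : p ≠ 0) (2 * p ^ t') f1 hf1ne hd1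
          have hd2f : π₂ ∣ f1 := hπ2p.dvd_of_dvd_pow hd2
          exact ih f1 hf1c' hf1deg hf1card hd1f hd2f
        · -- p ∣ u, ¬ p ∣ m : derivative is a single monomial in X^(m-1)
          have h2dvd : π₁ ^ 2 ∣ _ := dvd_trans (pow_dvd_pow π₁ (by omega : 2 ≤ At p (t+1))) hd1
          have hder : π₁ ∣ derivative (C x * X ^ 0 + C y * X ^ m + C z * X ^ u) := by
            simpa using aux_pow_dvd_derivative (m := 1) h2dvd
          have hu0 : ((u:ℕ):F) = 0 := (CharP.cast_eq_zero_iff F p u).mpr hpu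
          have hderval : derivative (C x * X ^ 0 + C y * X ^ m + C z * X ^ u)
              = C (y * (m:F)) * X ^ (m-1) := by
            simp only [derivative_add, derivative_C_mul, derivative_X_pow, hu0, C_mul, C_0,
              Nat.cast_ofNat, map_natCast]
            simp [hu0]
            ring
          have hyne : y * (m:F) ≠ 0 :=
            mul_ne_zero hy (fun h => hpm ((CharP.cast_eq_zero_iff F p m).mp h))
          exact aux_not_dvd_C_mul_X_pow hirr1 hc₁' hyne (m-1) (hderval ▸ hder)
      · by_cases hpm : p ∣ m
        · -- ¬ p ∣ u, p ∣ m : derivative is a single monomial in X^(u-1)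
          have h2dvd : π₁ ^ 2 ∣ _ := dvd_trans (pow_dvd_pow π₁ (by omega : 2 ≤ At p (t+1))) hd1
          have hder : π₁ ∣ derivative (C x * X ^ 0 + C y * X ^ m + C z * X ^ u) := by
            simpa using aux_pow_dvd_derivative (m := 1) h2dvd
          have hm0 : ((m:ℕ):F) = 0 := (CharP.cast_eq_zero_iff F p m).mpr hpm
          have hderval : derivative (C x * X ^ 0 + C y * X ^ m + C z * X ^ u)
              = C (z * (u:F)) * X ^ (u-1) := by
            simp only [derivative_add, derivative_C_mul, derivative_X_pow, C_mul]
            simp [hm0]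
            ring
          have hzne : z * (u:F) ≠ 0 :=
            mul_ne_zero hz (fun h => hpu ((CharP.cast_eq_zero_iff F p u).mp h))
          exact aux_not_dvd_C_mul_X_pow hirr1 hc₁' hzne (u-1) (hderval ▸ hder)
        · -- ¬ p ∣ u, ¬ p ∣ m : use u·f - X·f'
          obtain ⟨m1, rfl⟩ : ∃ m1, m = m1 + 1 := ⟨m - 1, by omega⟩
          obtain ⟨u1, rfl⟩ : ∃ u1, u = u1 + 1 := ⟨u - 1, by omega⟩
          have hum' : ((u1+1:ℕ):F) ≠ 0 := fun h => hpu ((CharP.cast_eq_zero_iff F p _).mp h)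
          have hmm' : ((m1+1:ℕ):F) ≠ 0 := fun h => hpm ((CharP.cast_eq_zero_iff F p _).mp h)
          have hderval : derivative (C x * X ^ 0 + C y * X ^ (m1+1) + C z * X ^ (u1+1))
              = C (y * ((m1+1:ℕ):F)) * X ^ m1 + C (z * ((u1+1:ℕ):F)) * X ^ u1 := by
            simp only [derivative_add, derivative_C_mul, derivative_X_pow, C_mul,
              Nat.add_sub_cancel]
            simp
            ring
          set g1 : F[X] := C ((u1+1:ℕ):F) * (C x * X ^ 0 + C y * X ^ (m1+1) + C z * X ^ (u1+1))
            - X * derivative (C x * X ^ 0 + C y * X ^ (m1+1) + C z * X ^ (u1+1)) with hg1def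
          rw [hAt] at hd1
          have hdg1 : π₁ ^ (2 * p ^ t) ∣ g1 := by
            refine dvd_sub (Dvd.dvd.mul_left (dvd_trans (pow_dvd_pow π₁ (by omega)) hd1) _) ?_
            exact Dvd.dvd.mul_left (aux_pow_dvd_derivative (m := 2 * p ^ t) hd1) X
          have hg1val : g1 = C (x * ((u1+1:ℕ):F)) * X ^ 0
              + C (y * (((u1+1:ℕ):F) - ((m1+1:ℕ):F))) * X ^ (m1+1) := by
            rw [hg1def, hderval]
            simp only [C_mul, map_sub]
            ring
          by_cases hum : ((u1+1:ℕ):F) = ((m1+1:ℕ):F)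
          · have hg1c : g1 = C (x * ((u1+1:ℕ):F)) * X ^ 0 := by
              rw [hg1val, hum, sub_self, mul_zero, C_0, zero_mul, add_zero]
            have hπdvd : π₁ ∣ g1 := dvd_trans (dvd_pow_self π₁ (by omega)) hdg1
            exact aux_not_dvd_C_mul_X_pow hirr1 hc₁' (mul_ne_zero hx hum') 0 (hg1c ▸ hπdvd)
          · have hsub : ((u1+1:ℕ):F) - ((m1+1:ℕ):F) ≠ 0 := sub_ne_zero.mpr hum
            have h2g1 : π₁ ^ 2 ∣ g1 := dvd_trans (pow_dvd_pow π₁ (by omega)) hdg1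
            have hderg1 : π₁ ∣ derivative g1 := by
              simpa using aux_pow_dvd_derivative (m := 1) h2g1
            have hderg1val : derivative g1
                = C (y * (((u1+1:ℕ):F) - ((m1+1:ℕ):F)) * ((m1+1:ℕ):F)) * X ^ m1 := by
              rw [hg1val]
              simp only [derivative_add, derivative_C_mul, derivative_X_pow, C_mul,
                Nat.add_sub_cancel]
              simp
              ring
            have hcoe : y * (((u1+1:ℕ):F) - ((m1+1:ℕ):F)) * ((m1+1:ℕ):F) ≠ 0 :=
              mul_ne_zero (mul_ne_zero hy hsub) hmm'
            exact aux_not_dvd_C_mul_X_pow hirr1 hc₁' hcoe m1 (hderg1val ▸ hderg1)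

private lemma aux_wrap (p n : ℕ) (hp : p.Prime) (hp3 : 3 ≤ p) (hn : 1 ≤ n)
    {F : Type*} [Field F] [Fintype F] [CharP F p]
    {ξ : F} (hξ : ξ ≠ 0)
    (hirr1 : Irreducible ((X : F[X]) ^ n - C ξ))
    (hirr2 : Irreducible ((X : F[X]) ^ n + C ξ))
    (t : ℕ) (f : F[X]) (hf0 : f ≠ 0) (hdeg : f.natDegree < 2 * n * p ^ t)
    (hcard : f.support.card ≤ 3)
    (hd1 : ((X : F[X]) ^ n - C ξ) ^ (At p t) ∣ f)
    (hd2 : ((X : F[X]) ^ n + C ξ) ∣ f) : False := by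
  set π₁ : F[X] := X ^ n - C ξ with hπ₁
  set π₂ : F[X] := X ^ n + C ξ with hπ₂
  have hc₁ : π₁.coeff 0 = -ξ := by
    rw [hπ₁, coeff_sub, coeff_X_pow, coeff_C, if_neg (by omega), if_pos rfl, zero_sub]
  have hc₂ : π₂.coeff 0 = ξ := by
    rw [hπ₂, coeff_add, coeff_X_pow, coeff_C, if_neg (by omega), if_pos rfl, zero_add]
  have hc₁' : π₁.coeff 0 ≠ 0 := by rw [hc₁]; exact neg_ne_zero.mpr hξ
  have hc₂' : π₂.coeff 0 ≠ 0 := by rw [hc₂]; exact hξ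
  have hπ1p : Prime π₁ := hirr1.prime
  have hπ2p : Prime π₂ := hirr2.prime
  have hX1 : ∀ k : ℕ, ¬ π₁ ∣ X ^ k := fun k h =>
    aux_not_dvd_C_mul_X_pow hirr1 hc₁' one_ne_zero k (by rwa [C_1, one_mul])
  have hX2 : ∀ k : ℕ, ¬ π₂ ∣ X ^ k := fun k h =>
    aux_not_dvd_C_mul_X_pow hirr2 hc₂' one_ne_zero k (by rwa [C_1, one_mul])
  have hcpos : 1 ≤ f.support.card := by
    rcases Nat.eq_zero_or_pos f.support.card with h | h
    · exact absurd (support_eq_empty.mp (Finset.card_eq_zero.mp h)) hf0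
    · exact h
  rcases (by omega : f.support.card = 1 ∨ f.support.card = 2 ∨ f.support.card = 3) with hc | hc | hc
  · obtain ⟨k, x, hx, rfl⟩ := Polynomial.card_support_eq_one.mp hc
    exact aux_not_dvd_C_mul_X_pow hirr2 hc₂' hx k hd2
  · obtain ⟨k, m, hkm, x, y, hx, hy, rfl⟩ := Polynomial.card_support_eq_two.mp hc
    obtain ⟨d, rfl⟩ : ∃ d, m = k + d := ⟨m - k, by omega⟩
    have hd1' : 1 ≤ d := by omega
    set g : F[X] := C x * X ^ 0 + C y * X ^ d with hgdef
    have hsplit : C x * X ^ k + C y * X ^ (k + d) = X ^ k * g := by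
      rw [hgdef]; ring
    rw [hsplit] at hd1 hd2 hf0 hdeg
    have hgne : g ≠ 0 := fun h => hf0 (by rw [h, mul_zero])
    have hd1g : π₁ ^ At p t ∣ g := hπ1p.pow_dvd_of_dvd_mul_left _ (hX1 k) hd1
    have hd2g : π₂ ∣ g := by
      have h := hπ2p.pow_dvd_of_dvd_mul_left 1 (hX2 k) (by rwa [pow_one])
      rwa [pow_one] at h
    have hgc : g.coeff 0 = x := by
      rw [hgdef, coeff_add, coeff_C_mul, coeff_C_mul, coeff_X_pow, coeff_X_pow,
        if_pos rfl, if_neg (by omega)]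
      simp
    have hgdeg : g.natDegree < 2 * n * p ^ t := by
      have h1 : (X ^ k * g).natDegree = k + g.natDegree := by
        rw [natDegree_mul (pow_ne_zero k X_ne_zero) hgne, natDegree_X_pow]
      omega
    exact aux_key p n hp hp3 hn hξ hirr1 hirr2 t g (hgc ▸ hx) hgdeg
      (le_trans (aux_card2 x y 0 d) (by omega)) hd1g hd2g
  · obtain ⟨k, m, u, hkm, hmu, x, y, z, hx, hy, hz, rfl⟩ := Polynomial.card_support_eq_three.mp hc
    obtain ⟨d, rfl⟩ : ∃ d, m = k + d := ⟨m - k, by omega⟩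
    obtain ⟨e, rfl⟩ : ∃ e, u = k + e := ⟨u - k, by omega⟩
    have hd1' : 1 ≤ d := by omega
    have hde : d < e := by omega
    set g : F[X] := C x * X ^ 0 + C y * X ^ d + C z * X ^ e with hgdef
    have hsplit : C x * X ^ k + C y * X ^ (k + d) + C z * X ^ (k + e) = X ^ k * g := by
      rw [hgdef]; ring
    rw [hsplit] at hd1 hd2 hf0 hdeg
    have hgne : g ≠ 0 := fun h => hf0 (by rw [h, mul_zero])
    have hd1g : π₁ ^ At p t ∣ g := hπ1p.pow_dvd_of_dvd_mul_left _ (hX1 k) hd1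
    have hd2g : π₂ ∣ g := by
      have h := hπ2p.pow_dvd_of_dvd_mul_left 1 (hX2 k) (by rwa [pow_one])
      rwa [pow_one] at h
    have hgc : g.coeff 0 = x := by
      rw [hgdef, coeff_add, coeff_add, coeff_C_mul, coeff_C_mul, coeff_C_mul, coeff_X_pow,
        coeff_X_pow, coeff_X_pow, if_pos rfl, if_neg (by omega), if_neg (by omega)]
      simp
    have hgdeg : g.natDegree < 2 * n * p ^ t := by
      have h1 : (X ^ k * g).natDegree = k + g.natDegree := by
        rw [natDegree_mul (pow_ne_zero k X_ne_zero) hgne, natDegree_X_pow]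
      omega
    exact aux_key p n hp hp3 hn hξ hirr1 hirr2 t g (hgc ▸ hx) hgdeg
      (aux_card3 x y z 0 d e) hd1g hd2g

private lemma aux_card_quad {F : Type*} [Field F] (a b c : F) (ha : a ≠ 0) (hb : b ≠ 0)
    (hc : c ≠ 0) {b1 b2 b3 : ℕ} (h1 : 0 < b1) (h2 : b1 < b2) (h3 : b2 < b3) :
    (C a * X ^ 0 + C b * X ^ b1 + C c * X ^ b2 + C 1 * X ^ b3 : F[X]).support.card = 4 := by
  rw [Polynomial.card_support_eq]
  refine ⟨![0, b1, b2, b3], ![a, b, c, 1], ?_, ?_, ?_⟩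
  · intro x y hxy
    fin_cases x <;> fin_cases y <;>
      simp_all [Fin.lt_def] <;> omega
  · intro x
    fin_cases x <;> simp [ha, hb, hc]
  · rw [Fin.sum_univ_four]
    simp [Matrix.cons_val]

theorem stmt_19 (p s n : ℕ) (hp : p.Prime) (hodd : Odd p) (hs : 1 ≤ s) (hn : 1 ≤ n)
    (F : Type*) [Field F] [Fintype F] [CharP F p]
    (ξ : F) (hξ : ξ ≠ 0)
    (hirr1 : Irreducible ((X : F[X]) ^ n - C ξ))
    (hirr2 : Irreducible ((X : F[X]) ^ n + C ξ))
    (lam : F) (hlam : lam = (ξ ^ 2) ^ p ^ s)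
    (i j : ℕ) (hi1 : 2 * p ^ (s - 1) < i) (hi2 : i < p ^ s) (hj1 : 0 < j) (hj2 : j ≤ p ^ (s - 1)) :
    sInf {w : ℕ | ∃ f : F[X], f ≠ 0 ∧ f.natDegree < 2 * n * p ^ s ∧
        Ideal.Quotient.mk (Ideal.span {(X : F[X]) ^ (2 * n * p ^ s) - C lam}) f ∈
          Ideal.span {Ideal.Quotient.mk (Ideal.span {(X : F[X]) ^ (2 * n * p ^ s) - C lam})
            (((X : F[X]) ^ n - C ξ) ^ i * ((X : F[X]) ^ n + C ξ) ^ j)} ∧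
        w = f.support.card} = 4 := by
  haveI : Fact p.Prime := ⟨hp⟩
  have hp3 : 3 ≤ p := by
    obtain ⟨k, hk⟩ := hodd
    have := hp.two_le
    omega
  set π₁ : F[X] := X ^ n - C ξ with hπ₁
  set π₂ : F[X] := X ^ n + C ξ with hπ₂
  have hπ₂' : π₂ = X ^ n - C (-ξ) := by rw [hπ₂, map_neg, sub_neg_eq_add]
  have hne₁ : π₁ ≠ 0 := hirr1.ne_zero
  have hne₂ : π₂ ≠ 0 := hirr2.ne_zero
  have hn₁ : π₁.natDegree = n := by rw [hπ₁]; exact natDegree_X_pow_sub_C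
  have hn₂ : π₂.natDegree = n := by rw [hπ₂']; exact natDegree_X_pow_sub_C
  set N : ℕ := 2 * n * p ^ s with hN
  set G : F[X] := π₁ ^ i * π₂ ^ j with hG
  set I : Ideal F[X] := Ideal.span {(X : F[X]) ^ N - C lam} with hI
  show sInf {w : ℕ | ∃ f : F[X], f ≠ 0 ∧ f.natDegree < N ∧
      Ideal.Quotient.mk I f ∈ Ideal.span {Ideal.Quotient.mk I G} ∧
      w = f.support.card} = 4
  have hfact : (X : F[X]) ^ N - C lam = (π₁ * π₂) ^ p ^ s := by
    have h12 : π₁ * π₂ = X ^ (2 * n) - C (ξ ^ 2) := by rw [hπ₁, hπ₂, map_pow]; ring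
    rw [h12, sub_pow_char_pow, ← pow_mul, ← map_pow, ← hlam, hN]
  have hps1 : p ^ (s - 1) ≤ p ^ s := Nat.pow_le_pow_right (by omega) (by omega)
  have hgh : G ∣ (X : F[X]) ^ N - C lam := by
    rw [hfact, mul_pow, hG]
    exact mul_dvd_mul (pow_dvd_pow _ (le_of_lt hi2)) (pow_dvd_pow _ (le_trans hj2 hps1))
  have hmem_dvd : ∀ f : F[X], (Ideal.Quotient.mk I f ∈
      Ideal.span {Ideal.Quotient.mk I G}) → G ∣ f := by
    intro f hmem
    rw [Ideal.mem_span_singleton'] at hmem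
    obtain ⟨a, ha⟩ := hmem
    obtain ⟨r, rfl⟩ := Ideal.Quotient.mk_surjective a
    have hz : Ideal.Quotient.mk I (f - r * G) = 0 := by
      rw [map_sub, map_mul, ha, sub_self]
    rw [Ideal.Quotient.eq_zero_iff_mem, hI, Ideal.mem_span_singleton] at hz
    have h1 : G ∣ f - r * G := dvd_trans hgh hz
    have h2 := dvd_add h1 (Dvd.dvd.mul_left (dvd_refl G) r)
    simpa using h2
  -- the weight-4 codeword
  set θ : F := ξ ^ p ^ s with hθ
  set η : F := ξ ^ p ^ (s - 1) with hη
  have hθ0 : θ ≠ 0 := pow_ne_zero _ hξ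
  have hη0 : η ≠ 0 := pow_ne_zero _ hξ
  set f₀ : F[X] := π₁ ^ p ^ s * π₂ ^ p ^ (s - 1) with hf₀
  have hps2 : p ^ (s - 1) < p ^ s := Nat.pow_lt_pow_right (by omega) (by omega)
  have hb2 : n * p ^ (s - 1) < n * p ^ s :=
    mul_lt_mul_of_pos_left hps2 (show 0 < n by omega)
  have hb1 : 0 < n * p ^ (s - 1) := Nat.mul_pos (by omega) (pow_pos (by omega) _)
  have hquad : f₀ = C (-(θ * η)) * X ^ 0 + C (-θ) * X ^ (n * p ^ (s - 1))
      + C η * X ^ (n * p ^ s) + C 1 * X ^ (n * p ^ s + n * p ^ (s - 1)) := by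
    have h1 : π₁ ^ p ^ s = X ^ (n * p ^ s) - C θ := by
      rw [hπ₁, sub_pow_char_pow, ← pow_mul, ← map_pow, hθ]
    have h2 : π₂ ^ p ^ (s - 1) = X ^ (n * p ^ (s - 1)) + C η := by
      rw [hπ₂, add_pow_char_pow, ← pow_mul, ← map_pow, hη]
    rw [hf₀, h1, h2]
    simp only [map_neg, map_mul, map_one]
    ring
  have hf₀ne : f₀ ≠ 0 := mul_ne_zero (pow_ne_zero _ hne₁) (pow_ne_zero _ hne₂)
  have hf₀deg : f₀.natDegree < N := by
    rw [hf₀, natDegree_mul (pow_ne_zero _ hne₁) (pow_ne_zero _ hne₂),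
      natDegree_pow, natDegree_pow, hn₁, hn₂, hN]
    calc p ^ s * n + p ^ (s - 1) * n < p ^ s * n + p ^ s * n := by
          have h := mul_lt_mul_of_pos_right hps2 (show 0 < n by omega)
          omega
    _ = 2 * n * p ^ s := by ring
  have hfeq : f₀ = π₁ ^ (p ^ s - i) * π₂ ^ (p ^ (s - 1) - j) * G := by
    rw [hf₀, hG]
    rw [show π₁ ^ (p ^ s - i) * π₂ ^ (p ^ (s - 1) - j) * (π₁ ^ i * π₂ ^ j)
      = (π₁ ^ i * π₁ ^ (p ^ s - i)) * (π₂ ^ j * π₂ ^ (p ^ (s - 1) - j)) from by ring,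
      pow_mul_pow_sub π₁ (le_of_lt hi2), pow_mul_pow_sub π₂ hj2]
  have hf₀mem : Ideal.Quotient.mk I f₀ ∈ Ideal.span {Ideal.Quotient.mk I G} := by
    rw [Ideal.mem_span_singleton']
    exact ⟨Ideal.Quotient.mk I (π₁ ^ (p ^ s - i) * π₂ ^ (p ^ (s - 1) - j)),
      by rw [← map_mul, ← hfeq]⟩
  have hcard₀ : f₀.support.card = 4 := by
    rw [hquad]
    exact aux_card_quad _ _ _ (neg_ne_zero.mpr (mul_ne_zero hθ0 hη0)) (neg_ne_zero.mpr hθ0)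
      hη0 hb1 hb2 (by omega)
  have h4mem : 4 ∈ {w : ℕ | ∃ f : F[X], f ≠ 0 ∧ f.natDegree < N ∧
      Ideal.Quotient.mk I f ∈ Ideal.span {Ideal.Quotient.mk I G} ∧
      w = f.support.card} := ⟨f₀, hf₀ne, hf₀deg, hf₀mem, hcard₀.symm⟩
  refine le_antisymm (Nat.sInf_le h4mem) ?_
  obtain ⟨f, hf0, hdeg, hmem, hw⟩ := Nat.sInf_mem (⟨4, h4mem⟩ : Set.Nonempty _)
  by_contra hlt
  push_neg at hlt
  have hcard : f.support.card ≤ 3 := by omega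
  have hGf : G ∣ f := hmem_dvd f hmem
  have hd1f : π₁ ^ i ∣ f := dvd_trans (Dvd.dvd.mul_right (dvd_refl _) _) hGf
  have hd2f : π₂ ^ j ∣ f := dvd_trans (Dvd.dvd.mul_left (dvd_refl _) _) hGf
  have hdegf : f.natDegree < 2 * n * p ^ s := by rw [← hN]; exact hdeg
  obtain ⟨s', hs'⟩ : ∃ s', s = s' + 1 := ⟨s - 1, by omega⟩
  have hAtle : At p (s' + 1) ≤ i := by
    show 2 * p ^ s' + 1 ≤ i
    have : s - 1 = s' := by omega
    rw [this] at hi1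
    omega
  have hd1 : π₁ ^ At p (s' + 1) ∣ f := dvd_trans (pow_dvd_pow π₁ hAtle) hd1f
  have hd2 : π₂ ∣ f := dvd_trans (dvd_pow_self π₂ (by omega)) hd2f
  rw [hs'] at hdegf
  exact aux_wrap p n hp hp3 hn hξ hirr1 hirr2 (s' + 1) f hf0 hdegf hcard hd1 hd2
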